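/- Let C and D be linear codes in F_q^n, both with support equal to {1,...,n}, and let H = (C ⋆ D)^⊥. Then the minimum distance of H satisfies d_H ≥ d_{C^⊥} + d_{D^⊥} - 2. -/

import Mathlib

open Polynomial Finset

variable {F : Type*} [Field F]

/-- Star (Schur) product of two codes: span of coordinatewise products. -/
def starProd {n : ℕ} (C D : Submodule F (Fin n → F)) : Submodule F (Fin n → F) :=
  Submodule.span F {x | ∃ c ∈ C, ∃ d ∈ D, x = c * d}

/-- Dual code w.r.t. the standard bilinear form. -/
def dualCode {n : ℕ} (C : Submodule F (Fin n → F)) : Submodule F (Fin n → F) where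
  carrier := {w | ∀ c ∈ C, ∑ i, c i * w i = 0}
  add_mem' := by
    intro a b ha hb c hc
    have h1 := ha c hc
    have h2 := hb c hc
    simp only [Set.mem_setOf_eq] at *
    calc ∑ i, c i * (a + b) i = (∑ i, c i * a i) + ∑ i, c i * b i := by
          rw [← Finset.sum_add_distrib]
          exact Finset.sum_congr rfl fun i _ => by simp [mul_add]
      _ = 0 := by rw [h1, h2, add_zero]
  zero_mem' := by
    intro c hc
    simp
  smul_mem' := by
    intro r a ha c hc
    have h := ha c hc
    simp only [Set.mem_setOf_eq] at *
    calc ∑ i, c i * (r • a) i = r * ∑ i, c i * a i := by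
          rw [Finset.mul_sum]
          exact Finset.sum_congr rfl fun i _ => by simp [smul_eq_mul]; ring
      _ = 0 := by rw [h, mul_zero]

/-- The repetition code: span of the all-ones vector. -/
def repCode (F : Type*) [Field F] (n : ℕ) : Submodule F (Fin n → F) :=
  Submodule.span F {fun _ => (1 : F)}

/-- `d` is the minimum Hamming distance of the linear code `C`. -/
def IsMinDist {n : ℕ} [DecidableEq F] (C : Submodule F (Fin n → F)) (d : ℕ) : Prop :=
  (∃ c ∈ C, c ≠ 0 ∧ hammingNorm c = d) ∧ ∀ c ∈ C, c ≠ 0 → d ≤ hammingNorm c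

/-- Evaluation map `f ↦ (v i * f(α i))_i`. -/
def grsEval {F : Type*} [Field F] (n : ℕ) (α v : Fin n → F) :
    Polynomial F →ₗ[F] (Fin n → F) where
  toFun := fun f => fun i => v i * f.eval (α i)
  map_add' := by intro f g; funext i; simp [mul_add]
  map_smul' := by intro r f; funext i; simp [smul_eq_mul]; ring

/-- Generalized Reed–Solomon code of dimension (at most) `k`. -/
noncomputable def GRS {F : Type*} [Field F] (n k : ℕ) (α v : Fin n → F) :
    Submodule F (Fin n → F) :=
  (Polynomial.degreeLT F k).map (grsEval n α v)

lemma mem_dualCode {n : ℕ} {C : Submodule F (Fin n → F)} {w : Fin n → F} :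
    w ∈ dualCode C ↔ ∀ c ∈ C, ∑ i, c i * w i = 0 := Iff.rfl

lemma mul_mem_dual_of_mem {n : ℕ} (C D : Submodule F (Fin n → F)) {c h : Fin n → F}
    (hc : c ∈ C) (hh : h ∈ dualCode (starProd C D)) : c * h ∈ dualCode D := by
  intro d hd
  have hx : c * d ∈ starProd C D := Submodule.subset_span ⟨c, hc, d, hd, rfl⟩
  have h0 := hh (c * d) hx
  calc ∑ i, d i * (c * h) i = ∑ i, (c * d) i * h i := by
        refine Finset.sum_congr rfl fun i _ => ?_
        simp only [Pi.mul_apply]; ring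
    _ = 0 := h0

/-- If every nonzero word of `C^⊥` has weight `≥ dC`, then the projection of `C`
onto any set of fewer than `dC` coordinates is surjective. -/
lemma proj_surjective {n : ℕ} [DecidableEq F] (C : Submodule F (Fin n → F)) {dC : ℕ}
    (hmin : ∀ w ∈ dualCode C, w ≠ 0 → dC ≤ hammingNorm w)
    (T : Finset (Fin n)) (hT : T.card < dC) (y : Fin n → F) :
    ∃ c ∈ C, ∀ i ∈ T, c i = y i := by
  classical
  set π : (Fin n → F) →ₗ[F] (↥T → F) := LinearMap.funLeft F F (fun t : ↥T => (t : Fin n))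
  have hV : C.map π = ⊤ := by
    by_contra hne
    obtain ⟨f, hf0, hfbot⟩ := (C.map π).exists_dual_map_eq_bot_of_lt_top
      (lt_top_iff_ne_top.2 hne) inferInstance
    set w : Fin n → F := fun i => if hi : i ∈ T then f (Pi.single (⟨i, hi⟩ : ↥T) 1) else 0
      with hw
    have hwdual : w ∈ dualCode C := by
      intro c hc
      have hπ : f (π c) = 0 := by
        have : f (π c) ∈ (C.map π).map f := Submodule.mem_map_of_mem (Submodule.mem_map_of_mem hc)
        rw [hfbot] at this
        exact (Submodule.mem_bot F).mp this
      have e1 : ∑ i, c i * w i = ∑ i ∈ T, c i * w i :=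
        (Finset.sum_subset (Finset.subset_univ T) (fun i _ hiT => by simp [hw, hiT])).symm
      have e2 : ∑ i ∈ T, c i * w i = ∑ t : ↥T, c (t : Fin n) * f (Pi.single t 1) := by
        rw [Finset.univ_eq_attach, ← Finset.sum_attach T (fun i => c i * w i)]
        refine Finset.sum_congr rfl fun t _ => ?_
        simp [hw, t.2]
      have e3 : f (π c) = ∑ t : ↥T, c (t : Fin n) * f (Pi.single t 1) := by
        conv_lhs => rw [show π c = ∑ t : ↥T, Pi.single t (c (t : Fin n)) from
          (Finset.univ_sum_single (π c)).symm]
        rw [map_sum]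
        refine Finset.sum_congr rfl fun t _ => ?_
        have hsingle : Pi.single t (c (t : Fin n)) =
            c (t : Fin n) • (Pi.single t (1 : F) : ↥T → F) := by
          rw [← Pi.single_smul, smul_eq_mul, mul_one]
        rw [hsingle, map_smul, smul_eq_mul]
      rw [e1, e2, ← e3, hπ]
    have hwne : w ≠ 0 := by
      intro hw0
      apply hf0
      have hsing : ∀ t : ↥T, f (Pi.single t (1 : F)) = 0 := fun t => by
        have := congrFun hw0 (t : Fin n)
        simpa [hw, t.2] using this
      apply LinearMap.ext
      intro x
      have hx : x = ∑ t : ↥T, Pi.single t (x t) := (Finset.univ_sum_single x).symm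
      rw [hx, map_sum]
      simp only [LinearMap.zero_apply]
      refine Finset.sum_eq_zero fun t _ => ?_
      have hsingle : Pi.single t (x t) = x t • (Pi.single t (1 : F) : ↥T → F) := by
        rw [← Pi.single_smul, smul_eq_mul, mul_one]
      rw [hsingle, map_smul, hsing, smul_zero]
    have hle : hammingNorm w ≤ T.card := by
      refine Finset.card_le_card ?_
      intro i hi
      simp only [hammingNorm] at hi
      by_contra hiT
      have : w i = 0 := by simp [hw, hiT]
      exact (Finset.mem_filter.mp hi).2 this
    exact absurd (hmin w hwdual hwne) (by omega)
  have : (fun t : ↥T => y t) ∈ C.map π := hV ▸ Submodule.mem_top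
  obtain ⟨c, hc, hcy⟩ := this
  exact ⟨c, hc, fun i hi => by
    have := congrFun hcy ⟨i, hi⟩
    simpa [π, LinearMap.funLeft] using this⟩

theorem dual_of_star_min_dist_lower_bound {F : Type*} [Field F] [Fintype F]
    [DecidableEq F] {n dC dD dH : ℕ} (C D : Submodule F (Fin n → F))
    (hC : ∀ i, ∃ c ∈ C, c i ≠ 0) (hD : ∀ i, ∃ d ∈ D, d i ≠ 0)
    (h1 : IsMinDist (dualCode C) dC) (h2 : IsMinDist (dualCode D) dD)
    (h3 : IsMinDist (dualCode (starProd C D)) dH) :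
    dC + dD - 2 ≤ dH := by
  classical
  obtain ⟨h, hhmem, hhne, hwt⟩ := h3.1
  set S : Finset (Fin n) := Finset.univ.filter (fun i => h i ≠ 0) with hSdef
  have hmemS : ∀ i, i ∈ S ↔ h i ≠ 0 := fun i => by simp [hSdef]
  have hScard : S.card = dH := by
    rw [← hwt]; simp [hammingNorm, hSdef]
  obtain ⟨j0, hj0⟩ : ∃ j, h j ≠ 0 := Function.ne_iff.mp hhne
  have hnorm_le : ∀ c : Fin n → F, hammingNorm (c * h) ≤ hammingNorm h := by
    intro c
    refine Finset.card_le_card fun i hi => ?_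
    simp only [hammingNorm, Finset.mem_filter, Finset.mem_univ, true_and,
      Pi.mul_apply] at hi ⊢
    exact right_ne_zero_of_mul hi
  have hDdH : dD ≤ dH := by
    obtain ⟨c, hc, hcj⟩ := hC j0
    have hg : c * h ∈ dualCode D := mul_mem_dual_of_mem C D hc hhmem
    have hgne : c * h ≠ 0 := by
      intro h0
      have := congrFun h0 j0
      simp only [Pi.mul_apply, Pi.zero_apply] at this
      exact (mul_ne_zero hcj hj0) this
    have := h2.2 _ hg hgne
    have := hnorm_le c
    omega
  have hdC1 : 1 ≤ dC := by
    obtain ⟨w, hw, hwne, hwn⟩ := h1.1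
    have : hammingNorm w ≠ 0 := hammingNorm_ne_zero_iff.mpr hwne
    omega
  by_cases hdC : dC ≤ 1
  · omega
  push_neg at hdC
  by_cases hcase : dC - 1 ≤ dH
  · obtain ⟨T, hTS, hTcard⟩ := Finset.exists_subset_card_eq
      (show dC - 1 ≤ S.card by omega)
    have hTne : T.Nonempty := Finset.card_pos.mp (by omega)
    obtain ⟨j, hjT⟩ := hTne
    obtain ⟨c, hc, hcT⟩ := proj_surjective C h1.2 T (by omega)
      (fun i => if i = j then 1 else 0)
    have hcj : c j = 1 := by simpa using hcT j hjT
    have hg : c * h ∈ dualCode D := mul_mem_dual_of_mem C D hc hhmem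
    have hjS : j ∈ S := hTS hjT
    have hhj : h j ≠ 0 := (hmemS j).mp hjS
    have hgne : c * h ≠ 0 := by
      intro h0
      have := congrFun h0 j
      simp only [Pi.mul_apply, Pi.zero_apply, hcj, one_mul] at this
      exact hhj this
    have hdDle := h2.2 _ hg hgne
    have hsub : Finset.univ.filter (fun i => (c * h) i ≠ 0) ⊆ S \ (T.erase j) := by
      intro i hi
      simp only [Finset.mem_filter, Finset.mem_univ, true_and, Pi.mul_apply] at hi
      rw [Finset.mem_sdiff, Finset.mem_erase]
      refine ⟨(hmemS i).mpr (right_ne_zero_of_mul hi), ?_⟩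
      rintro ⟨hij, hiT⟩
      have : c i = 0 := by simpa [hij] using hcT i hiT
      exact hi (by simp [this])
    have hcard : (S \ (T.erase j)).card = dH - (dC - 2) := by
      rw [Finset.card_sdiff_of_subset ((Finset.erase_subset _ _).trans hTS),
        Finset.card_erase_of_mem hjT, hTcard, hScard]
      omega
    have hle2 : hammingNorm (c * h) ≤ dH - (dC - 2) := by
      rw [← hcard]
      refine le_trans (le_of_eq ?_) (Finset.card_le_card hsub)
      simp [hammingNorm]
    omega
  · push_neg at hcase
    exfalso
    obtain ⟨c, hc, hcS⟩ := proj_surjective C h1.2 S (by omega)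
      (fun i => if i = j0 then 1 else 0)
    have hg : c * h ∈ dualCode D := mul_mem_dual_of_mem C D hc hhmem
    obtain ⟨d, hd, hdj⟩ := hD j0
    have h0 := hg d hd
    have hsum : ∑ i, d i * (c * h) i = d j0 * h j0 := by
      rw [Finset.sum_eq_single j0]
      · have hcj0 : c j0 = 1 := by simpa using hcS j0 ((hmemS j0).mpr hj0)
        simp [hcj0]
      · intro i _ hij
        by_cases hiS : i ∈ S
        · have : c i = 0 := by simpa [hij] using hcS i hiS
          simp [this]
        · have : h i = 0 := by
            by_contra hne
            exact hiS ((hmemS i).mpr hne)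
          simp [this]
      · simp
    rw [hsum] at h0
    exact (mul_ne_zero hdj hj0) h0
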